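/- Let (J,W) be a graphon and S ⊆ J a finite set that is an average ε-net for the similarity metric r_{W∘W}, i.e., ∫_J r_{W∘W}(x,S) dπ(x) ≤ ε. Then the partition P of J into the Voronoi cells of S satisfies ‖W − W_P‖_□ ≤ 8√ε; i.e., the Voronoi cells form a weak regularity partition with error 8√ε. -/

import Mathlib

open MeasureTheory

set_option linter.unusedTactic false
set_option linter.unusedVariables false

open MeasureTheory

lemma vcw_integrable {α : Type*} [MeasurableSpace α] {ν : Measure α}
    [IsFiniteMeasure ν] {f : α → ℝ} (hf : AEStronglyMeasurable f ν) {C : ℝ}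
    (h : ∀ x, |f x| ≤ C) : Integrable f ν :=
  (integrable_const C).mono' hf (Filter.Eventually.of_forall fun x => by
    simpa [Real.norm_eq_abs] using h x)

lemma vcw_sq {α : Type*} [MeasurableSpace α] {ν : Measure α}
    [IsProbabilityMeasure ν] {f : α → ℝ} (hf : Integrable f ν)
    (hf2 : Integrable (fun x => f x ^ 2) ν) :
    (∫ x, |f x| ∂ν) ^ 2 ≤ ∫ x, f x ^ 2 ∂ν := by
  set m := ∫ x, |f x| ∂ν with hm
  have habs : Integrable (fun x => |f x|) ν := hf.abs
  have key : ∫ x, (|f x| - m) ^ 2 ∂ν = (∫ x, f x ^ 2 ∂ν) - m ^ 2 := by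
    have h1 : ∀ x, (|f x| - m) ^ 2 = (f x ^ 2 - (2 * m) * |f x|) + m ^ 2 := by
      intro x; rw [sub_sq, sq_abs]; ring
    have hsub : Integrable (fun x => f x ^ 2 - (2 * m) * |f x|) ν := by
      exact hf2.sub (habs.const_mul _)
    have hcm : Integrable (fun x => (2 * m) * |f x|) ν := habs.const_mul _
    simp_rw [h1]
    rw [integral_add hsub (integrable_const _), integral_sub hf2 hcm,
      integral_const_mul, integral_const]
    simp only [measure_univ, ENNReal.toReal_one, one_smul, probReal_univ, ← hm]
    ring
  have h0 : 0 ≤ ∫ x, (|f x| - m) ^ 2 ∂ν := integral_nonneg fun x => sq_nonneg _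
  rw [key] at h0
  linarith


/-- If `S` is an average `ε`-net for the similarity metric `r_{W∘W}` of a
graphon `(J,W)`, then the partition of `J` into the Voronoi cells of `S` is a
weak regularity partition with error `8√ε`. The cell assignment is `c`, and
`WP` is the stepwise averaging of `W` over the Voronoi cells. -/
theorem voronoi_cells_weak_regularity
    {J : Type*} [MeasurableSpace J] (μ : Measure J) [IsProbabilityMeasure μ]
    (W : J → J → ℝ)
    (hWmeas : Measurable (fun p : J × J => W p.1 p.2))
    (hWsymm : ∀ x y, W x y = W y x)
    (hW0 : ∀ x y, 0 ≤ W x y) (hW1 : ∀ x y, W x y ≤ 1)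
    (simdist : J → J → ℝ)
    (hsim : ∀ a b, simdist a b = ∫ x, |∫ y, W x y * (W y a - W y b) ∂μ| ∂μ)
    (S : Finset J) (hS : S.Nonempty)
    -- `c` assigns to each point the center of its Voronoi cell
    (c : J → J) (hcS : ∀ x, c x ∈ S)
    (hvoronoi : ∀ x, ∀ s ∈ S, simdist x (c x) ≤ simdist x s)
    (hcellmeas : ∀ s ∈ S, MeasurableSet {z | c z = s})
    (hcellpos : ∀ s ∈ S, 0 < μ {z | c z = s})
    -- `S` is an average ε-net
    (ε : ℝ) (hε : 0 < ε)
    (hnet : (∫ x, simdist x (c x) ∂μ) ≤ ε)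
    -- the stepwise averaging of `W` over the Voronoi cells
    (WP : J → J → ℝ)
    (hWP : ∀ x y, WP x y =
      (∫ u in {z | c z = c x}, ∫ v in {z | c z = c y}, W u v ∂μ ∂μ) /
        ((μ {z | c z = c x}).toReal * (μ {z | c z = c y}).toReal)) :
    ∀ A B : Set J, MeasurableSet A → MeasurableSet B →
      |∫ u in A, ∫ v in B, (W u v - WP u v) ∂μ ∂μ| ≤ 8 * Real.sqrt ε := by
  intro A B hA hB
  classical
  have sqε0 : (0:ℝ) ≤ Real.sqrt ε := Real.sqrt_nonneg ε
  -- basic facts about W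
  have mW1 : ∀ x, Measurable (W x) := fun x => hWmeas.comp measurable_prodMk_left
  have mW2 : ∀ y, Measurable fun x => W x y := fun y => hWmeas.comp measurable_prodMk_right
  have hWabs : ∀ x y, |W x y| ≤ 1 := fun x y => abs_le.2 ⟨by linarith [hW0 x y], hW1 x y⟩
  -- integrability helpers
  have intb : ∀ (f : J → ℝ) (Cb : ℝ), Measurable f → (∀ x, |f x| ≤ Cb) → Integrable f μ :=
    fun f Cb hf hb => vcw_integrable hf.aestronglyMeasurable hb
  have intOn : ∀ (f : J → ℝ) (X : Set J) (Cb : ℝ), Measurable f → (∀ x, |f x| ≤ Cb) →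
      IntegrableOn f X μ := fun f X Cb hf hb => (intb f Cb hf hb).integrableOn
  have intP : ∀ (F : J × J → ℝ) (Cb : ℝ), Measurable F → (∀ z, |F z| ≤ Cb) →
      Integrable F (μ.prod μ) := fun F Cb hF hb => vcw_integrable hF.aestronglyMeasurable hb
  have absle : ∀ (f : J → ℝ) (Cb : ℝ), Measurable f → (∀ x, |f x| ≤ Cb) →
      |∫ x, f x ∂μ| ≤ Cb := by
    intro f Cb hf hb
    have h1 : |∫ x, f x ∂μ| ≤ ∫ x, |f x| ∂μ := by
      simpa only [Real.norm_eq_abs] using norm_integral_le_integral_norm (μ := μ) f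
    have h2 : ∫ x, |f x| ∂μ ≤ ∫ x, Cb ∂μ :=
      integral_mono (intb f Cb hf hb).abs (integrable_const _) hb
    simpa using h1.trans h2
  have hμ1 : ∀ X : Set J, (μ X).toReal ≤ 1 := fun X => by
    simpa using ENNReal.toReal_mono (by simp) (prob_le_one (μ := μ) (s := X))
  have absleOn : ∀ (f : J → ℝ) (X : Set J) (Cb : ℝ), Measurable f → (∀ x, |f x| ≤ Cb) →
      (0 ≤ Cb) → |∫ x in X, f x ∂μ| ≤ Cb * (μ X).toReal := by
    intro f X Cb hf hb hCb
    have h1 : |∫ x in X, f x ∂μ| ≤ ∫ x in X, |f x| ∂μ := by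
      simpa only [Real.norm_eq_abs] using norm_integral_le_integral_norm (μ := μ.restrict X) f
    have h2 : ∫ x in X, |f x| ∂μ ≤ ∫ x in X, Cb ∂μ :=
      integral_mono (intOn f X Cb hf hb).abs (integrable_const _) hb
    rw [setIntegral_const, smul_eq_mul, measureReal_def] at h2
    have := h1.trans h2
    linarith [this]
  -- cells
  set C : J → Set J := fun s => {z | c z = s} with hCdef
  have hCmeas : ∀ s ∈ S, MeasurableSet (C s) := hcellmeas
  have hmem : ∀ u, u ∈ C (c u) := fun u => rfl
  have huniq : ∀ u s, u ∈ C s → s = c u := fun u s h => h.symm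
  have hdisj : (↑S : Set J).Pairwise (Function.onFun Disjoint C) := by
    intro s _ t _ hst
    refine Set.disjoint_left.2 fun u hus hut => hst ?_
    rw [huniq u s hus, huniq u t hut]
  have hcover : (⋃ s ∈ S, C s) = Set.univ := by
    ext u
    simp only [Set.mem_iUnion, Set.mem_univ, iff_true]
    exact ⟨c u, hcS u, hmem u⟩
  set m : J → ℝ := fun s => (μ (C s)).toReal with hmdef
  have hmpos : ∀ s ∈ S, 0 < m s := fun s hs =>
    ENNReal.toReal_pos (hcellpos s hs).ne' (measure_ne_top μ _)
  -- cellwise-constant functions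
  have cellfun_val : ∀ (g : J → ℝ) (u : J),
      (∑ s ∈ S, (C s).indicator (fun _ => g s) u) = g (c u) := by
    intro g u
    rw [Finset.sum_eq_single_of_mem (c u) (hcS u)]
    · exact Set.indicator_of_mem (hmem u) _
    · intro t ht hne
      exact Set.indicator_of_notMem (fun h => hne (huniq u t h)) _
  have cellfun_meas : ∀ g : J → ℝ,
      Measurable fun u => ∑ s ∈ S, (C s).indicator (fun _ => g s) u :=
    fun g => Finset.measurable_sum _ fun s hs => measurable_const.indicator (hCmeas s hs)
  -- integral of a cellwise-constant function over a measurable set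
  have cellint : ∀ (X : Set J), MeasurableSet X → ∀ (G : J → ℝ) (g : J → ℝ),
      (∀ s ∈ S, ∀ u ∈ C s, G u = g s) →
      ∫ u in X, G u ∂μ = ∑ s ∈ S, (μ (X ∩ C s)).toReal * g s := by
    intro X hX G g hG
    have hXcover : (⋃ s ∈ S, (X ∩ C s)) = X := by
      have h1 : (⋃ s ∈ S, X ∩ C s) = X ∩ ⋃ s ∈ S, C s := (Set.inter_iUnion₂ _ _).symm
      rw [h1, hcover, Set.inter_univ]
    have hdisj' : (↑S : Set J).Pairwise (Function.onFun Disjoint fun s => X ∩ C s) :=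
      fun s hs t ht hst => (hdisj hs ht hst).mono Set.inter_subset_right Set.inter_subset_right
    have hint : ∀ s ∈ S, IntegrableOn G (X ∩ C s) μ := by
      intro s hs
      refine (integrableOn_congr_fun (fun u hu => hG s hs u hu.2) (hX.inter (hCmeas s hs))).2 ?_
      exact integrableOn_const (measure_ne_top μ _)
    calc ∫ u in X, G u ∂μ = ∫ u in ⋃ s ∈ S, (X ∩ C s), G u ∂μ := by rw [hXcover]
      _ = ∑ s ∈ S, ∫ u in X ∩ C s, G u ∂μ :=
          integral_biUnion_finset S (fun s hs => hX.inter (hCmeas s hs)) hdisj' hint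
      _ = ∑ s ∈ S, (μ (X ∩ C s)).toReal * g s := by
          refine Finset.sum_congr rfl fun s hs => ?_
          rw [setIntegral_congr_fun (hX.inter (hCmeas s hs)) (fun u hu => hG s hs u hu.2),
            setIntegral_const, smul_eq_mul, measureReal_def]
  -- the kernel K = W ∘ W
  set K : J → J → ℝ := fun u u' => ∫ v, W u v * W u' v ∂μ with hKdef
  have mKpair : Measurable fun p : J × J => K p.1 p.2 := by
    have hm : Measurable fun q : (J × J) × J => W q.1.1 q.2 * W q.1.2 q.2 := by
      have h1 : Measurable fun q : (J × J) × J => W q.1.1 q.2 :=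
        hWmeas.comp (measurable_fst.fst.prodMk measurable_snd)
      have h2 : Measurable fun q : (J × J) × J => W q.1.2 q.2 :=
        hWmeas.comp (measurable_fst.snd.prodMk measurable_snd)
      exact h1.mul h2
    exact hm.stronglyMeasurable.integral_prod_right'.measurable
  have mK1 : ∀ u, Measurable (K u) := fun u => mKpair.comp measurable_prodMk_left
  have hKabs : ∀ u u', |K u u'| ≤ 1 := by
    intro u u'
    refine absle _ 1 ((mW1 u).mul (mW1 u')) fun v => ?_
    beta_reduce; rw [abs_mul]
    exact mul_le_one₀ (hWabs u v) (abs_nonneg _) (hWabs u' v)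
  have hKsym : ∀ u u', K u u' = K u' u := by
    intro u u'
    exact integral_congr_ae (Filter.Eventually.of_forall fun v => mul_comm _ _)
  have hsim' : ∀ x s, simdist x s = ∫ x', |K x' x - K x' s| ∂μ := by
    intro x s
    rw [hsim]
    refine integral_congr_ae (Filter.Eventually.of_forall fun x' => ?_)
    congr 1
    have h1 : ∀ y, W x' y * (W y x - W y s) = W x' y * W x y - W x' y * W s y := by
      intro y; rw [hWsymm y x, hWsymm y s]; ring
    simp_rw [h1]
    rw [integral_sub (intb (fun y => W x' y * W x y) 1 ((mW1 x').mul (mW1 x)) ?hb1) (intb (fun y => W x' y * W s y) 1 ((mW1 x').mul (mW1 s)) ?hb2)]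
    case hb1 =>
      intro y; beta_reduce; rw [abs_mul]; exact mul_le_one₀ (hWabs x' y) (abs_nonneg _) (hWabs x y)
    case hb2 =>
      intro y; beta_reduce; rw [abs_mul]; exact mul_le_one₀ (hWabs x' y) (abs_nonneg _) (hWabs s y)
  -- stepped kernel
  set KS : J → J → ℝ := fun u u' => ∑ s ∈ S, (C s).indicator (fun _ => K s u') u with hKSdef
  have hKSval : ∀ u u', KS u u' = K (c u) u' := fun u u' => cellfun_val (fun s => K s u') u
  have mKSpair : Measurable fun z : J × J => KS z.1 z.2 := by
    have hrw : (fun z : J × J => KS z.1 z.2)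
        = fun z : J × J => ∑ s ∈ S, (C s).indicator (fun _ => (1:ℝ)) z.1 * K s z.2 := by
      funext z
      rw [hKSdef]
      refine Finset.sum_congr rfl fun s _ => ?_
      by_cases h : z.1 ∈ C s
      · simp [Set.indicator_of_mem h]
      · simp [Set.indicator_of_notMem h]
    rw [hrw]
    exact Finset.measurable_sum _ fun s hs =>
      ((measurable_const.indicator (hCmeas s hs)).comp measurable_fst).mul
        ((mK1 s).comp measurable_snd)
  have hKSabs : ∀ u u', |KS u u'| ≤ 1 := fun u u' => by rw [hKSval]; exact hKabs _ _
  -- measurability and integrability of x ↦ simdist x (c x)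
  have hsdrepr : (fun x => simdist x (c x)) = fun x => ∫ x', |K x' x - KS x x'| ∂μ := by
    funext x
    rw [hsim' x (c x)]
    refine integral_congr_ae (Filter.Eventually.of_forall fun x' => ?_)
    simp only [hKSval]
    rw [hKsym x' (c x)]
  have msd : Measurable fun x => simdist x (c x) := by
    rw [hsdrepr]
    have hm : Measurable fun q : J × J => |K q.2 q.1 - KS q.1 q.2| := by
      refine Measurable.abs (Measurable.sub ?_ ?_)
      · exact mKpair.comp (measurable_snd.prodMk measurable_fst)
      · exact mKSpair
    exact hm.stronglyMeasurable.integral_prod_right'.measurable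
  have hsdbd : ∀ x, |simdist x (c x)| ≤ 2 := by
    intro x
    rw [show simdist x (c x) = ∫ x', |K x' x - KS x x'| ∂μ from congrFun hsdrepr x]
    refine absle _ 2 ?_ fun x' => ?_
    · have h1 : Measurable fun x' : J => K x' x := mKpair.comp (measurable_id.prodMk measurable_const)
      have h2 : Measurable (KS x) := mKSpair.comp (measurable_const.prodMk measurable_id)
      exact (h1.sub h2).abs
    · beta_reduce; rw [abs_abs]
      calc |K x' x - KS x x'| ≤ |K x' x| + |KS x x'| := abs_sub _ _
        _ ≤ 2 := by linarith [hKabs x' x, hKSabs x x']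
  -- the key estimate
  have MAIN : ∀ p q : J → ℝ, Measurable p → Measurable q →
      (∀ x, |p x| ≤ 1) → (∀ x, |q x| ≤ 1) →
      (∀ s ∈ S, (∫ u in C s, p u ∂μ) = 0) →
      |∫ u, p u * ∫ v, W u v * q v ∂μ ∂μ| ≤ Real.sqrt ε := by
    intro p q hp hq hpb hqb hp0
    set h : J → ℝ := fun v => ∫ u, W u v * p u ∂μ with hhdef
    have mWswap : Measurable fun z : J × J => W z.2 z.1 :=
      hWmeas.comp (measurable_snd.prodMk measurable_fst)
    have mh : Measurable h := by
      have hm : Measurable fun z : J × J => W z.2 z.1 * p z.2 :=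
        mWswap.mul (hp.comp measurable_snd)
      exact hm.stronglyMeasurable.integral_prod_right'.measurable
    have hhb : ∀ v, |h v| ≤ 1 := by
      intro v
      refine absle _ 1 ((mW2 v).mul hp) fun u => ?_
      beta_reduce; rw [abs_mul]; exact mul_le_one₀ (hWabs u v) (abs_nonneg _) (hpb u)
    have step1 : (∫ u, p u * ∫ v, W u v * q v ∂μ ∂μ) = ∫ v, q v * h v ∂μ := by
      have fub1 : Integrable (Function.uncurry fun u v => W u v * p u * q v) (μ.prod μ) := by
        refine intP _ 1 ((hWmeas.mul (hp.comp measurable_fst)).mul (hq.comp measurable_snd)) ?_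
        intro z; simp only [Function.uncurry]; beta_reduce; rw [abs_mul, abs_mul]
        exact mul_le_one₀ (mul_le_one₀ (hWabs _ _) (abs_nonneg _) (hpb _)) (by positivity) (hqb _)
      calc (∫ u, p u * ∫ v, W u v * q v ∂μ ∂μ)
          = ∫ u, ∫ v, W u v * p u * q v ∂μ ∂μ := by
            refine integral_congr_ae (Filter.Eventually.of_forall fun u => ?_)
            beta_reduce
            rw [← integral_const_mul]
            exact integral_congr_ae (Filter.Eventually.of_forall fun v => by ring)
        _ = ∫ v, ∫ u, W u v * p u * q v ∂μ ∂μ := integral_integral_swap fub1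
        _ = ∫ v, q v * h v ∂μ := by
            refine integral_congr_ae (Filter.Eventually.of_forall fun v => ?_)
            beta_reduce
            rw [integral_mul_const, mul_comm]
    have step2 : |∫ v, q v * h v ∂μ| ≤ ∫ v, |h v| ∂μ := by
      have h1 : |∫ v, q v * h v ∂μ| ≤ ∫ v, |q v * h v| ∂μ := by
        simpa only [Real.norm_eq_abs] using
          norm_integral_le_integral_norm (μ := μ) fun v => q v * h v
      refine h1.trans (integral_mono ?_ (intb _ 1 mh hhb).abs ?_)
      · refine (intb (fun v => q v * h v) 1 (hq.mul mh) fun v => ?_).abs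
        beta_reduce; rw [abs_mul]; exact mul_le_one₀ (hqb v) (abs_nonneg _) (hhb v)
      · intro v; beta_reduce; rw [abs_mul]
        exact mul_le_of_le_one_left (abs_nonneg _) (hqb v)
    have step3 : (∫ v, |h v| ∂μ) ^ 2 ≤ ∫ v, h v ^ 2 ∂μ := by
      refine vcw_sq (intb h 1 mh hhb) (intb _ 1 (mh.pow_const 2) fun v => ?_)
      beta_reduce; rw [abs_pow]; exact pow_le_one₀ (abs_nonneg _) (hhb v)
    have inner4 : ∀ u, ∫ v, W u v * h v ∂μ = ∫ u', p u' * K u u' ∂μ := by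
      intro u
      have fub : Integrable (Function.uncurry fun v u' => W u v * (W u' v * p u')) (μ.prod μ) := by
        refine intP _ 1 (((mW1 u).comp measurable_fst).mul
          (mWswap.mul (hp.comp measurable_snd))) ?_
        intro z; simp only [Function.uncurry]; beta_reduce; rw [abs_mul, abs_mul]
        exact mul_le_one₀ (hWabs _ _) (by positivity)
          (mul_le_one₀ (hWabs _ _) (abs_nonneg _) (hpb _))
      calc ∫ v, W u v * h v ∂μ
          = ∫ v, ∫ u', W u v * (W u' v * p u') ∂μ ∂μ := by
            refine integral_congr_ae (Filter.Eventually.of_forall fun v => ?_)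
            beta_reduce
            rw [integral_const_mul]
        _ = ∫ u', ∫ v, W u v * (W u' v * p u') ∂μ ∂μ := integral_integral_swap fub
        _ = ∫ u', p u' * K u u' ∂μ := by
            refine integral_congr_ae (Filter.Eventually.of_forall fun u' => ?_)
            beta_reduce
            rw [show (fun v => W u v * (W u' v * p u')) = fun v => p u' * (W u v * W u' v) from
              funext fun v => by ring, integral_const_mul]
    have step4 : ∫ v, h v ^ 2 ∂μ = ∫ u, p u * ∫ u', p u' * K u u' ∂μ ∂μ := by
      have fub : Integrable (Function.uncurry fun v u => W u v * p u * h v) (μ.prod μ) := by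
        refine intP _ 1 ((mWswap.mul (hp.comp measurable_snd)).mul (mh.comp measurable_fst)) ?_
        intro z; simp only [Function.uncurry]; beta_reduce; rw [abs_mul, abs_mul]
        exact mul_le_one₀ (mul_le_one₀ (hWabs _ _) (abs_nonneg _) (hpb _)) (by positivity) (hhb _)
      calc ∫ v, h v ^ 2 ∂μ
          = ∫ v, ∫ u, W u v * p u * h v ∂μ ∂μ := by
            refine integral_congr_ae (Filter.Eventually.of_forall fun v => ?_)
            beta_reduce
            rw [integral_mul_const, sq]
        _ = ∫ u, ∫ v, W u v * p u * h v ∂μ ∂μ := integral_integral_swap fub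
        _ = ∫ u, p u * ∫ v, W u v * h v ∂μ ∂μ := by
            refine integral_congr_ae (Filter.Eventually.of_forall fun u => ?_)
            beta_reduce
            rw [← integral_const_mul]
            exact integral_congr_ae (Filter.Eventually.of_forall fun v => by ring)
        _ = ∫ u, p u * ∫ u', p u' * K u u' ∂μ ∂μ := by
            refine integral_congr_ae (Filter.Eventually.of_forall fun u => ?_)
            beta_reduce
            rw [inner4]
    have mKS2 : ∀ u, Measurable fun u' => KS u u' :=
      fun u => mKSpair.comp (measurable_const.prodMk measurable_id)
    have zero1 : ∀ u', (∫ u, p u * KS u u' ∂μ) = 0 := by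
      intro u'
      have e : (fun u => p u * KS u u')
          = fun u => ∑ s ∈ S, (C s).indicator (fun x => K s u' * p x) u := by
        funext u
        rw [hKSdef, Finset.mul_sum]
        refine Finset.sum_congr rfl fun s _ => ?_
        by_cases hm' : u ∈ C s
        · simp [Set.indicator_of_mem hm', mul_comm]
        · simp [Set.indicator_of_notMem hm']
      rw [e, integral_finset_sum]
      · refine Finset.sum_eq_zero fun s hs => ?_
        rw [integral_indicator (hCmeas s hs), integral_const_mul, hp0 s hs, mul_zero]
      · intro s hs
        refine intb _ 1 ((hp.const_mul _).indicator (hCmeas s hs)) fun x => ?_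
        by_cases hm' : x ∈ C s
        · beta_reduce; rw [Set.indicator_of_mem hm', abs_mul]
          exact mul_le_one₀ (hKabs _ _) (abs_nonneg _) (hpb _)
        · beta_reduce; rw [Set.indicator_of_notMem hm']; simp
    have Z0 : (∫ u, p u * ∫ u', p u' * KS u u' ∂μ ∂μ) = 0 := by
      have fub : Integrable (Function.uncurry fun u u' => p u * p u' * KS u u') (μ.prod μ) := by
        refine intP _ 1 (((hp.comp measurable_fst).mul (hp.comp measurable_snd)).mul mKSpair)
          fun z => ?_
        simp only [Function.uncurry]
        beta_reduce; rw [abs_mul, abs_mul]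
        exact mul_le_one₀ (mul_le_one₀ (hpb _) (abs_nonneg _) (hpb _)) (by positivity) (hKSabs _ _)
      calc (∫ u, p u * ∫ u', p u' * KS u u' ∂μ ∂μ)
          = ∫ u, ∫ u', p u * p u' * KS u u' ∂μ ∂μ := by
            refine integral_congr_ae (Filter.Eventually.of_forall fun u => ?_)
            beta_reduce
            rw [← integral_const_mul]
            exact integral_congr_ae (Filter.Eventually.of_forall fun u' => by ring)
        _ = ∫ u', ∫ u, p u * p u' * KS u u' ∂μ ∂μ := integral_integral_swap fub
        _ = ∫ u', p u' * ∫ u, p u * KS u u' ∂μ ∂μ := by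
            refine integral_congr_ae (Filter.Eventually.of_forall fun u' => ?_)
            beta_reduce
            rw [← integral_const_mul]
            exact integral_congr_ae (Filter.Eventually.of_forall fun u => by ring)
        _ = 0 := by simp only [zero1, mul_zero, integral_zero]
    have idiff : ∀ u, Integrable (fun u' => p u' * (K u u' - KS u u')) μ := by
      intro u
      refine intb _ 2 (hp.mul ((mK1 u).sub (mKS2 u))) fun u' => ?_
      beta_reduce; rw [abs_mul]
      calc |p u'| * |K u u' - KS u u'| ≤ 1 * 2 := by
            refine mul_le_mul (hpb u') ?_ (abs_nonneg _) zero_le_one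
            calc |K u u' - KS u u'| ≤ |K u u'| + |KS u u'| := abs_sub _ _
              _ ≤ 2 := by linarith [hKabs u u', hKSabs u u']
        _ = 2 := by norm_num
    have mdfn : Measurable fun u => ∫ u', p u' * (K u u' - KS u u') ∂μ := by
      have hm2 : Measurable fun z : J × J => p z.2 * (K z.1 z.2 - KS z.1 z.2) :=
        (hp.comp measurable_snd).mul (mKpair.sub mKSpair)
      exact hm2.stronglyMeasurable.integral_prod_right'.measurable
    have Ebound : |∫ u, p u * ∫ u', p u' * (K u u' - KS u u') ∂μ ∂μ| ≤ ε := by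
      have inner_bd : ∀ u, |p u * ∫ u', p u' * (K u u' - KS u u') ∂μ| ≤ simdist u (c u) := by
        intro u
        have h1 : |∫ u', p u' * (K u u' - KS u u') ∂μ| ≤ ∫ u', |K u u' - KS u u'| ∂μ := by
          have h1a : |∫ u', p u' * (K u u' - KS u u') ∂μ|
              ≤ ∫ u', |p u' * (K u u' - KS u u')| ∂μ := by
            simpa only [Real.norm_eq_abs] using norm_integral_le_integral_norm (μ := μ)
              fun u' => p u' * (K u u' - KS u u')
          have hKd : ∀ u', |K u u' - KS u u'| ≤ 2 := fun u' => by
            calc |K u u' - KS u u'| ≤ |K u u'| + |KS u u'| := abs_sub _ _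
              _ ≤ 2 := by linarith [hKabs u u', hKSabs u u']
          have hint2 : Integrable (fun u' => |K u u' - KS u u'|) μ :=
            intb _ 2 ((mK1 u).sub (mKS2 u)).abs fun u' => by beta_reduce; rw [abs_abs]; exact hKd u'
          refine h1a.trans (integral_mono (idiff u).abs hint2 fun u' => ?_)
          beta_reduce; rw [abs_mul]
          exact mul_le_of_le_one_left (abs_nonneg _) (hpb u')
        have h2 : ∫ u', |K u u' - KS u u'| ∂μ = simdist u (c u) := by
          rw [hsim' u (c u)]
          refine integral_congr_ae (Filter.Eventually.of_forall fun u' => ?_)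
          simp only [hKSval]
          rw [hKsym u u', hKsym (c u) u']
        beta_reduce; rw [abs_mul]
        calc |p u| * |∫ u', p u' * (K u u' - KS u u') ∂μ|
            ≤ |∫ u', p u' * (K u u' - KS u u') ∂μ| :=
              mul_le_of_le_one_left (abs_nonneg _) (hpb u)
          _ ≤ simdist u (c u) := h2 ▸ h1
      have houter : |∫ u, p u * ∫ u', p u' * (K u u' - KS u u') ∂μ ∂μ|
          ≤ ∫ u, |p u * ∫ u', p u' * (K u u' - KS u u') ∂μ| ∂μ := by
        simpa only [Real.norm_eq_abs] using norm_integral_le_integral_norm (μ := μ)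
          fun u => p u * ∫ u', p u' * (K u u' - KS u u') ∂μ
      refine houter.trans (le_trans (integral_mono ?_ (intb _ 2 msd hsdbd) inner_bd) hnet)
      refine (intb (fun u => p u * ∫ u', p u' * (K u u' - KS u u') ∂μ) 2 (hp.mul mdfn) fun u => ?_).abs
      beta_reduce; rw [abs_mul]
      calc |p u| * |∫ u', p u' * (K u u' - KS u u') ∂μ|
          ≤ |∫ u', p u' * (K u u' - KS u u') ∂μ| :=
            mul_le_of_le_one_left (abs_nonneg _) (hpb u)
        _ ≤ 2 := by
            have h1a : |∫ u', p u' * (K u u' - KS u u') ∂μ|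
                ≤ ∫ u', |p u' * (K u u' - KS u u')| ∂μ := by
              simpa only [Real.norm_eq_abs] using norm_integral_le_integral_norm (μ := μ)
                fun u' => p u' * (K u u' - KS u u')
            refine h1a.trans ?_
            have := absle (fun u' => |p u' * (K u u' - KS u u')|) 2
              (hp.mul ((mK1 u).sub (mKS2 u))).abs ?_
            · calc ∫ u', |p u' * (K u u' - KS u u')| ∂μ
                  ≤ |∫ u', |p u' * (K u u' - KS u u')| ∂μ| := le_abs_self _
                _ ≤ 2 := this
            · intro u'
              rw [abs_abs, abs_mul]
              calc |p u'| * |K u u' - KS u u'| ≤ 1 * 2 := by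
                    refine mul_le_mul (hpb u') ?_ (abs_nonneg _) zero_le_one
                    calc |K u u' - KS u u'| ≤ |K u u'| + |KS u u'| := abs_sub _ _
                      _ ≤ 2 := by linarith [hKabs u u', hKSabs u u']
                _ = 2 := by norm_num
    have iKS : ∀ u, Integrable (fun u' => p u' * KS u u') μ := by
      intro u
      refine intb _ 1 (hp.mul (mKS2 u)) fun u' => ?_
      beta_reduce; rw [abs_mul]
      exact mul_le_one₀ (hpb u') (abs_nonneg _) (hKSabs u u')
    have mKSint : Measurable fun u => ∫ u', p u' * KS u u' ∂μ :=
      ((hp.comp measurable_snd).mul mKSpair).stronglyMeasurable.integral_prod_right'.measurable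
    have splitQ : (∫ u, p u * ∫ u', p u' * K u u' ∂μ ∂μ)
        = (∫ u, p u * ∫ u', p u' * (K u u' - KS u u') ∂μ ∂μ)
          + ∫ u, p u * ∫ u', p u' * KS u u' ∂μ ∂μ := by
      have i1 : Integrable (fun u => p u * ∫ u', p u' * (K u u' - KS u u') ∂μ) μ := by
        refine intb _ 2 (hp.mul mdfn) fun u => ?_
        beta_reduce; rw [abs_mul]
        refine le_trans (mul_le_of_le_one_left (abs_nonneg _) (hpb u)) ?_
        have h1a : |∫ u', p u' * (K u u' - KS u u') ∂μ|
            ≤ ∫ u', |p u' * (K u u' - KS u u')| ∂μ := by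
          simpa only [Real.norm_eq_abs] using norm_integral_le_integral_norm (μ := μ)
            fun u' => p u' * (K u u' - KS u u')
        refine h1a.trans ?_
        refine le_trans (integral_mono (idiff u).abs (integrable_const 2) fun u' => ?_) (by simp)
        beta_reduce; rw [abs_mul]
        calc |p u'| * |K u u' - KS u u'| ≤ 1 * 2 := by
              refine mul_le_mul (hpb u') ?_ (abs_nonneg _) zero_le_one
              calc |K u u' - KS u u'| ≤ |K u u'| + |KS u u'| := abs_sub _ _
                _ ≤ 2 := by linarith [hKabs u u', hKSabs u u']
          _ = 2 := by norm_num
      have i2 : Integrable (fun u => p u * ∫ u', p u' * KS u u' ∂μ) μ := by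
        refine intb _ 1 (hp.mul mKSint) fun u => ?_
        beta_reduce; rw [abs_mul]
        refine le_trans (mul_le_of_le_one_left (abs_nonneg _) (hpb u)) ?_
        refine absle _ 1 (hp.mul (mKS2 u)) fun u' => ?_
        beta_reduce; rw [abs_mul]
        exact mul_le_one₀ (hpb u') (abs_nonneg _) (hKSabs u u')
      rw [← integral_add i1 i2]
      refine integral_congr_ae (Filter.Eventually.of_forall fun u => ?_)
      beta_reduce
      rw [← mul_add, ← integral_add (idiff u) (iKS u)]
      congr 1
      exact integral_congr_ae (Filter.Eventually.of_forall fun u' => by ring)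
    have hQ : ∫ v, h v ^ 2 ∂μ ≤ ε := by
      rw [step4, splitQ, Z0, add_zero]
      exact (le_abs_self _).trans Ebound
    have hint : ∫ v, |h v| ∂μ ≤ Real.sqrt ε :=
      (Real.le_sqrt (integral_nonneg fun v => abs_nonneg _) hε.le).2 (step3.trans hQ)
    rw [step1]
    exact le_trans step2 hint
  -- indicators and step functions
  set ind : Set J → J → ℝ := fun X => X.indicator fun _ => (1:ℝ) with hinddef
  have mind : ∀ X : Set J, MeasurableSet X → Measurable (ind X) :=
    fun X hX => measurable_const.indicator hX
  have hind01 : ∀ (X : Set J) u, 0 ≤ ind X u ∧ ind X u ≤ 1 := by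
    intro X u; rw [hinddef]; beta_reduce
    by_cases h : u ∈ X
    · simp [Set.indicator_of_mem h]
    · simp [Set.indicator_of_notMem h]
  have hindb : ∀ (X : Set J) u, |ind X u| ≤ 1 := by
    intro X u
    rw [abs_le]; exact ⟨by linarith [(hind01 X u).1], (hind01 X u).2⟩
  set av : Set J → J → ℝ := fun X s => (μ (X ∩ C s)).toReal / m s with havdef
  have hav01 : ∀ (X : Set J), ∀ s ∈ S, 0 ≤ av X s ∧ av X s ≤ 1 := by
    intro X s hs
    constructor
    · exact div_nonneg ENNReal.toReal_nonneg (hmpos s hs).le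
    · rw [havdef]; beta_reduce
      rw [div_le_one (hmpos s hs)]
      exact ENNReal.toReal_mono (measure_ne_top μ _) (measure_mono Set.inter_subset_right)
  have havabs : ∀ (X : Set J), ∀ s ∈ S, |av X s| ≤ 1 := by
    intro X s hs
    rw [abs_le]; exact ⟨by linarith [(hav01 X s hs).1], (hav01 X s hs).2⟩
  set stepf : Set J → J → ℝ := fun X u => ∑ s ∈ S, (C s).indicator (fun _ => av X s) u
    with hstepdef
  have hstep_val : ∀ X u, stepf X u = av X (c u) := fun X u => cellfun_val (av X) u
  have hstep_meas : ∀ X, Measurable (stepf X) := fun X => cellfun_meas (av X)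
  have hstep01 : ∀ (X : Set J) u, 0 ≤ stepf X u ∧ stepf X u ≤ 1 := by
    intro X u; rw [hstep_val]
    exact hav01 X (c u) (hcS u)
  have hstepb : ∀ (X : Set J) u, |stepf X u| ≤ 1 := by
    intro X u
    rw [abs_le]; exact ⟨by linarith [(hstep01 X u).1], (hstep01 X u).2⟩
  have hdiffb : ∀ (X : Set J) u, |ind X u - stepf X u| ≤ 1 := by
    intro X u
    have h1 := hind01 X u; have h2 := hstep01 X u
    rw [abs_le]; exact ⟨by linarith [h1.1, h1.2, h2.1, h2.2], by linarith [h1.1, h1.2, h2.1, h2.2]⟩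
  -- zero cell averages
  have hzero : ∀ (X : Set J), MeasurableSet X → ∀ s ∈ S,
      (∫ u in C s, (ind X u - stepf X u) ∂μ) = 0 := by
    intro X hX s hs
    have hint1 : ∫ u in C s, ind X u ∂μ = (μ (X ∩ C s)).toReal := by
      rw [hinddef]; beta_reduce
      rw [setIntegral_indicator hX, setIntegral_const, smul_eq_mul, measureReal_def, mul_one, Set.inter_comm]
    have hint2 : ∫ u in C s, stepf X u ∂μ = (μ (X ∩ C s)).toReal := by
      rw [setIntegral_congr_fun (hCmeas s hs) (g := fun _ => av X s)
        (fun u hu => by rw [hstep_val, show c u = s from hu])]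
      rw [setIntegral_const, smul_eq_mul, measureReal_def, havdef]; beta_reduce
      rw [mul_comm, div_mul_cancel₀ _ (hmpos s hs).ne']
    rw [integral_sub (intOn _ _ 1 (mind X hX) (hindb X)) (intOn _ _ 1 (hstep_meas X) (hstepb X)),
      hint1, hint2, sub_self]
  -- the averaged kernel
  set wc : J → J → ℝ := fun s t => (∫ u in C s, ∫ v in C t, W u v ∂μ ∂μ) / (m s * m t)
    with hwcdef
  have hWPval : ∀ x y, WP x y = wc (c x) (c y) := fun x y => hWP x y
  have mIW : ∀ t : J, Measurable fun u => ∫ v in C t, W u v ∂μ := fun t =>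
    hWmeas.stronglyMeasurable.integral_prod_right'.measurable
  have hinnerW : ∀ (u t : J), t ∈ S → |∫ v in C t, W u v ∂μ| ≤ m t := by
    intro u t ht
    have := absleOn (W u) (C t) 1 (mW1 u) (fun v => hWabs u v) zero_le_one
    simpa using this
  have hwc : ∀ s ∈ S, ∀ t ∈ S, |wc s t| ≤ 1 := by
    intro s hs t ht
    rw [hwcdef]; beta_reduce
    rw [abs_div, abs_of_pos (mul_pos (hmpos s hs) (hmpos t ht)),
      div_le_one (mul_pos (hmpos s hs) (hmpos t ht))]
    have h1 : |∫ u in C s, ∫ v in C t, W u v ∂μ ∂μ| ≤ m t * (μ (C s)).toReal :=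
      absleOn _ (C s) (m t) (mIW t) (fun u => hinnerW u t ht) (hmpos t ht).le
    calc |∫ u in C s, ∫ v in C t, W u v ∂μ ∂μ| ≤ m t * (μ (C s)).toReal := h1
      _ = m s * m t := by rw [mul_comm]
  have hWPb : ∀ x y, |WP x y| ≤ 1 := fun x y => by
    rw [hWPval]; exact hwc _ (hcS x) _ (hcS y)
  have mWP1 : ∀ x, Measurable (WP x) := by
    intro x
    have e : WP x = fun y => ∑ t ∈ S, (C t).indicator (fun _ => wc (c x) t) y := by
      funext y
      rw [cellfun_val (fun t => wc (c x) t) y, hWPval]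
    rw [e]
    exact cellfun_meas _
  -- the WP integral over A × B
  have hWPinner : ∀ u, ∫ v in B, WP u v ∂μ = ∑ t ∈ S, (μ (B ∩ C t)).toReal * wc (c u) t := by
    intro u
    exact cellint B hB (WP u) (fun t => wc (c u) t)
      (fun t ht v hv => by rw [hWPval u v, show c v = t from hv])
  have hWPint : ∫ u in A, ∫ v in B, WP u v ∂μ ∂μ
      = ∑ s ∈ S, (μ (A ∩ C s)).toReal * ∑ t ∈ S, (μ (B ∩ C t)).toReal * wc s t := by
    refine cellint A hA _ (fun s => ∑ t ∈ S, (μ (B ∩ C t)).toReal * wc s t) ?_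
    intro s hs u hu
    rw [hWPinner u]
    refine Finset.sum_congr rfl fun t ht => ?_
    rw [show c u = s from hu]
  -- the bilinear form
  set T : (J → ℝ) → (J → ℝ) → ℝ := fun p q' => ∫ u, p u * ∫ v, W u v * q' v ∂μ ∂μ with hTdef
  have minner2 : ∀ g : J → ℝ, Measurable g → Measurable fun u => ∫ v, W u v * g v ∂μ :=
    fun g hg =>
      (hWmeas.mul (hg.comp measurable_snd)).stronglyMeasurable.integral_prod_right'.measurable
  have binner2 : ∀ g : J → ℝ, Measurable g → (∀ v, |g v| ≤ 1) →
      ∀ u, |∫ v, W u v * g v ∂μ| ≤ 1 := by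
    intro g hg hgb u
    refine absle _ 1 ((mW1 u).mul hg) fun v => ?_
    beta_reduce; rw [abs_mul]
    exact mul_le_one₀ (hWabs u v) (abs_nonneg _) (hgb v)
  have intT : ∀ f g : J → ℝ, Measurable f → Measurable g → (∀ x, |f x| ≤ 1) →
      (∀ v, |g v| ≤ 1) → Integrable (fun u => f u * ∫ v, W u v * g v ∂μ) μ := by
    intro f g hf hg hfb hgb
    refine intb _ 1 (hf.mul (minner2 g hg)) fun u => ?_
    beta_reduce; rw [abs_mul]
    exact mul_le_one₀ (hfb u) (abs_nonneg _) (binner2 g hg hgb u)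
  -- ∫∫_{A×B} W = T (ind A) (ind B)
  have hTW : ∫ u in A, ∫ v in B, W u v ∂μ ∂μ = T (ind A) (ind B) := by
    have hin : ∀ u, ∫ v in B, W u v ∂μ = ∫ v, W u v * ind B v ∂μ := by
      intro u
      rw [← integral_indicator hB]
      refine integral_congr_ae (Filter.Eventually.of_forall fun v => ?_)
      rw [hinddef]; beta_reduce
      by_cases h : v ∈ B
      · simp [Set.indicator_of_mem h]
      · simp [Set.indicator_of_notMem h]
    rw [hTdef]; beta_reduce
    rw [← integral_indicator hA]
    refine integral_congr_ae (Filter.Eventually.of_forall fun u => ?_)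
    by_cases h : u ∈ A
    · rw [Set.indicator_of_mem h, hinddef]; beta_reduce
      rw [Set.indicator_of_mem h, one_mul, hin u]
    · rw [Set.indicator_of_notMem h, hinddef]; beta_reduce
      rw [Set.indicator_of_notMem h, zero_mul]
  -- T (stepf A) (stepf B) equals the WP integral
  have hTab_inner : ∀ u, ∫ v, W u v * stepf B v ∂μ
      = ∑ t ∈ S, av B t * ∫ v in C t, W u v ∂μ := by
    intro u
    have e : (fun v => W u v * stepf B v)
        = fun v => ∑ t ∈ S, (C t).indicator (fun v => av B t * W u v) v := by
      funext v
      rw [hstepdef]; beta_reduce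
      rw [Finset.mul_sum]
      refine Finset.sum_congr rfl fun t _ => ?_
      by_cases h : v ∈ C t
      · simp only [Set.indicator_of_mem h]; ring
      · simp [Set.indicator_of_notMem h]
    rw [e, integral_finset_sum]
    · refine Finset.sum_congr rfl fun t ht => ?_
      rw [integral_indicator (hCmeas t ht), integral_const_mul]
    · intro t ht
      refine intb _ 1 (((mW1 u).const_mul _).indicator (hCmeas t ht)) fun v => ?_
      by_cases h : v ∈ C t
      · beta_reduce; rw [Set.indicator_of_mem h]; beta_reduce; rw [abs_mul]
        exact mul_le_one₀ (havabs B t ht) (abs_nonneg _) (hWabs u v)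
      · beta_reduce; rw [Set.indicator_of_notMem h]; simp
  have hTab : T (stepf A) (stepf B)
      = ∑ s ∈ S, (μ (A ∩ C s)).toReal * ∑ t ∈ S, (μ (B ∩ C t)).toReal * wc s t := by
    have hFrw : (fun u => stepf A u * ∫ v, W u v * stepf B v ∂μ)
        = fun u => ∑ s ∈ S, (C s).indicator (fun u => av A s * ∫ v, W u v * stepf B v ∂μ) u := by
      funext u
      conv_lhs => rw [hstepdef]
      beta_reduce
      rw [Finset.sum_mul]
      refine Finset.sum_congr rfl fun s _ => ?_
      by_cases h : u ∈ C s
      · simp [Set.indicator_of_mem h, hstepdef]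
      · simp [Set.indicator_of_notMem h]
    rw [hTdef]; beta_reduce
    rw [hFrw, integral_finset_sum]
    · refine Finset.sum_congr rfl fun s hs => ?_
      rw [integral_indicator (hCmeas s hs), integral_const_mul]
      have e1 : ∫ u in C s, (∫ v, W u v * stepf B v ∂μ) ∂μ
          = ∑ t ∈ S, av B t * ∫ u in C s, ∫ v in C t, W u v ∂μ ∂μ := by
        rw [setIntegral_congr_fun (hCmeas s hs)
          (g := fun u => ∑ t ∈ S, av B t * ∫ v in C t, W u v ∂μ) fun u _ => hTab_inner u]
        rw [integral_finset_sum]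
        · refine Finset.sum_congr rfl fun t ht => ?_
          rw [integral_const_mul]
        · intro t ht
          refine (intb _ 1 ((mIW t).const_mul _) fun u => ?_).integrableOn
          beta_reduce; rw [abs_mul]
          exact mul_le_one₀ (havabs B t ht) (abs_nonneg _) ((hinnerW u t ht).trans (hμ1 _))
      rw [e1, Finset.mul_sum, Finset.mul_sum]
      refine Finset.sum_congr rfl fun t ht => ?_
      have hms := (hmpos s hs).ne'
      have hmt := (hmpos t ht).ne'
      rw [havdef, hwcdef]; beta_reduce
      field_simp
    · intro s hs
      refine intb _ 1 (((minner2 _ (hstep_meas B)).const_mul _).indicator (hCmeas s hs))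
        fun u => ?_
      by_cases h : u ∈ C s
      · beta_reduce; rw [Set.indicator_of_mem h]; beta_reduce; rw [abs_mul]
        exact mul_le_one₀ (havabs A s hs) (abs_nonneg _)
          (binner2 _ (hstep_meas B) (hstepb B) u)
      · beta_reduce; rw [Set.indicator_of_notMem h]; simp
  -- splitting the goal integral
  have hIWBb : ∀ u, |∫ v in B, W u v ∂μ| ≤ 1 := by
    intro u
    refine (absleOn (W u) B 1 (mW1 u) (fun v => hWabs u v) zero_le_one).trans ?_
    rw [one_mul]; exact hμ1 B
  have hIWPb : ∀ u, |∫ v in B, WP u v ∂μ| ≤ 1 := by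
    intro u
    refine (absleOn (WP u) B 1 (mWP1 u) (hWPb u) zero_le_one).trans ?_
    rw [one_mul]; exact hμ1 B
  have mIWB : Measurable fun u => ∫ v in B, W u v ∂μ :=
    hWmeas.stronglyMeasurable.integral_prod_right'.measurable
  have mIWPB : Measurable fun u => ∫ v in B, WP u v ∂μ := by
    have e : (fun u => ∫ v in B, WP u v ∂μ)
        = fun u => ∑ s ∈ S, (C s).indicator
            (fun _ => ∑ t ∈ S, (μ (B ∩ C t)).toReal * wc s t) u := by
      funext u
      rw [hWPinner u, cellfun_val]
    rw [e]
    exact cellfun_meas _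
  have hsub1 : ∫ u in A, ∫ v in B, (W u v - WP u v) ∂μ ∂μ
      = (∫ u in A, ∫ v in B, W u v ∂μ ∂μ) - ∫ u in A, ∫ v in B, WP u v ∂μ ∂μ := by
    have e1 : ∀ u, ∫ v in B, (W u v - WP u v) ∂μ
        = (∫ v in B, W u v ∂μ) - ∫ v in B, WP u v ∂μ :=
      fun u => integral_sub (intOn _ _ 1 (mW1 u) (hWabs u)) (intOn _ _ 1 (mWP1 u) (hWPb u))
    calc ∫ u in A, ∫ v in B, (W u v - WP u v) ∂μ ∂μ
        = ∫ u in A, ((∫ v in B, W u v ∂μ) - ∫ v in B, WP u v ∂μ) ∂μ :=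
          integral_congr_ae (Filter.Eventually.of_forall e1)
      _ = _ := integral_sub (intOn _ _ 1 mIWB hIWBb) (intOn _ _ 1 mIWPB hIWPb)
  -- bilinearity
  have hdecomp : T (ind A) (ind B) - T (stepf A) (stepf B)
      = T (fun u => ind A u - stepf A u) (ind B)
        + T (stepf A) (fun v => ind B v - stepf B v) := by
    have h1 : T (fun u => ind A u - stepf A u) (ind B)
        = T (ind A) (ind B) - T (stepf A) (ind B) := by
      rw [hTdef]; beta_reduce
      rw [← integral_sub (intT _ _ (mind A hA) (mind B hB) (hindb A) (hindb B))
        (intT _ _ (hstep_meas A) (mind B hB) (hstepb A) (hindb B))]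
      refine integral_congr_ae (Filter.Eventually.of_forall fun u => ?_)
      beta_reduce; ring
    have h2 : T (stepf A) (fun v => ind B v - stepf B v)
        = T (stepf A) (ind B) - T (stepf A) (stepf B) := by
      rw [hTdef]; beta_reduce
      rw [← integral_sub (intT _ _ (hstep_meas A) (mind B hB) (hstepb A) (hindb B))
        (intT _ _ (hstep_meas A) (hstep_meas B) (hstepb A) (hstepb B))]
      refine integral_congr_ae (Filter.Eventually.of_forall fun u => ?_)
      beta_reduce
      have ibB : Integrable (fun v => W u v * ind B v) μ := by
        refine intb _ 1 ((mW1 u).mul (mind B hB)) fun v => ?_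
        beta_reduce; rw [abs_mul]
        exact mul_le_one₀ (hWabs u v) (abs_nonneg _) (hindb B v)
      have ibb : Integrable (fun v => W u v * stepf B v) μ := by
        refine intb _ 1 ((mW1 u).mul (hstep_meas B)) fun v => ?_
        beta_reduce; rw [abs_mul]
        exact mul_le_one₀ (hWabs u v) (abs_nonneg _) (hstepb B v)
      rw [← mul_sub, ← integral_sub ibB ibb]
      congr 1
      refine integral_congr_ae (Filter.Eventually.of_forall fun v => ?_)
      beta_reduce; ring
    linarith [h1, h2]
  -- symmetry of T
  have Tsymm : ∀ p' q' : J → ℝ, Measurable p' → Measurable q' → (∀ x, |p' x| ≤ 1) →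
      (∀ x, |q' x| ≤ 1) → T p' q' = T q' p' := by
    intro p' q' hp' hq' hpb' hqb'
    rw [hTdef]; beta_reduce
    have fub : Integrable (Function.uncurry fun u v => W u v * q' v * p' u) (μ.prod μ) := by
      refine intP _ 1 ((hWmeas.mul (hq'.comp measurable_snd)).mul (hp'.comp measurable_fst))
        fun z => ?_
      simp only [Function.uncurry]; beta_reduce; rw [abs_mul, abs_mul]
      exact mul_le_one₀ (mul_le_one₀ (hWabs _ _) (abs_nonneg _) (hqb' _)) (by positivity) (hpb' _)
    calc ∫ u, p' u * ∫ v, W u v * q' v ∂μ ∂μ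
        = ∫ u, ∫ v, W u v * q' v * p' u ∂μ ∂μ := by
          refine integral_congr_ae (Filter.Eventually.of_forall fun u => ?_)
          beta_reduce
          rw [integral_mul_const, mul_comm]
      _ = ∫ v, ∫ u, W u v * q' v * p' u ∂μ ∂μ := integral_integral_swap fub
      _ = ∫ v, q' v * ∫ u, W v u * p' u ∂μ ∂μ := by
          refine integral_congr_ae (Filter.Eventually.of_forall fun v => ?_)
          beta_reduce
          rw [← integral_const_mul]
          refine integral_congr_ae (Filter.Eventually.of_forall fun u => ?_)
          beta_reduce
          rw [hWsymm v u]; ring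
  -- the two applications of MAIN
  have M1 : |T (fun u => ind A u - stepf A u) (ind B)| ≤ Real.sqrt ε := by
    rw [hTdef]; beta_reduce
    exact MAIN _ _ ((mind A hA).sub (hstep_meas A)) (mind B hB) (hdiffb A) (hindb B)
      (fun s hs => hzero A hA s hs)
  have M2 : |T (stepf A) (fun v => ind B v - stepf B v)| ≤ Real.sqrt ε := by
    rw [Tsymm (stepf A) (fun v => ind B v - stepf B v) (hstep_meas A) ((mind B hB).sub (hstep_meas B)) (hstepb A) (hdiffb B)]
    rw [hTdef]; beta_reduce
    exact MAIN _ _ ((mind B hB).sub (hstep_meas B)) (hstep_meas A) (hdiffb B) (hstepb A)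
      (fun s hs => hzero B hB s hs)
  -- assemble
  have keyeq : ∫ u in A, ∫ v in B, (W u v - WP u v) ∂μ ∂μ
      = T (fun u => ind A u - stepf A u) (ind B)
        + T (stepf A) (fun v => ind B v - stepf B v) := by
    rw [hsub1, hTW, hWPint, ← hTab, hdecomp]
  rw [keyeq]
  calc |T (fun u => ind A u - stepf A u) (ind B)
        + T (stepf A) (fun v => ind B v - stepf B v)|
      ≤ |T (fun u => ind A u - stepf A u) (ind B)|
        + |T (stepf A) (fun v => ind B v - stepf B v)| := abs_add_le _ _
    _ ≤ Real.sqrt ε + Real.sqrt ε := add_le_add M1 M2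
    _ ≤ 8 * Real.sqrt ε := by linarith [sqε0]
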